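/- Let Q be a prime power with Q ≡ ±2 (mod 5) and β ∈ F_Q. Then the polynomial x^5 + β·x^3 + 5^{−1}·β^2·x permutes F_Q. -/

import Mathlib

/-- Fifth powers are injective among elements fixed by `x ↦ x^(N+1)` when `gcd 5 N = 1`. -/
lemma fifth_inj {F : Type*} [Field F] (N : ℕ) (hcop : Nat.Coprime 5 N)
    (w z : F) (hw : w ^ (N + 1) = w) (hz : z ^ (N + 1) = z) (h5 : w ^ 5 = z ^ 5) : w = z := by
  by_cases hz0 : z = 0
  · subst hz0
    have : w ^ 5 = 0 := by simpa using h5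
    exact pow_eq_zero_iff (n := 5) (by norm_num) |>.mp this
  · have hw0 : w ≠ 0 := by
      intro h; subst h
      exact hz0 (pow_eq_zero_iff (n := 5) (by norm_num) |>.mp (by simpa using h5.symm))
    have hwN : w ^ N = 1 := by
      have : w ^ N * w = 1 * w := by rw [one_mul, ← pow_succ]; exact hw
      exact mul_right_cancel₀ hw0 this
    have hzN : z ^ N = 1 := by
      have : z ^ N * z = 1 * z := by rw [one_mul, ← pow_succ]; exact hz
      exact mul_right_cancel₀ hz0 this
    set r := w * z⁻¹ with hr
    have hr5 : r ^ 5 = 1 := by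
      rw [hr, mul_pow, h5, inv_pow, mul_inv_cancel₀ (pow_ne_zero _ hz0)]
    have hrN : r ^ N = 1 := by
      rw [hr, mul_pow, hwN, inv_pow, hzN, inv_one, one_mul]
    have h1 : orderOf r ∣ 5 := orderOf_dvd_of_pow_eq_one hr5
    have h2 : orderOf r ∣ N := orderOf_dvd_of_pow_eq_one hrN
    have : orderOf r ∣ Nat.gcd 5 N := Nat.dvd_gcd h1 h2
    rw [hcop] at this
    have hr1 : r = 1 := orderOf_eq_one_iff.mp (Nat.dvd_one.mp this)
    field_simp [hr] at hr1
    exact (mul_inv_eq_one₀ hz0).mp hr1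

/-- A root of `z^2 = b z - c`, with `b, c` fixed by Frobenius `x ↦ x^Q`, is fixed by `x ↦ x^(Q^2)`. -/
lemma root_pow_fix {F : Type*} [Field F] (p : ℕ) [Fact p.Prime] [CharP F p] (n Q : ℕ)
    (hQ : Q = p ^ n) (b c u : F) (hb : b ^ Q = b) (hc : c ^ Q = c) (hu : u ^ 2 = b * u - c) :
    u ^ Q ^ 2 = u := by
  subst hQ
  have h1 : (u ^ p ^ n) ^ 2 = b * u ^ p ^ n - c := by
    have hc2 : (u ^ p ^ n) ^ 2 = (u ^ 2) ^ p ^ n := by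
      rw [← pow_mul, ← pow_mul, mul_comm]
    rw [hc2, hu, sub_pow_char_pow, mul_pow, hb, hc]
  have hfac : (u ^ p ^ n - u) * (u ^ p ^ n + u - b) = 0 := by
    linear_combination h1 - hu
  have hsq : u ^ (p ^ n) ^ 2 = (u ^ p ^ n) ^ p ^ n := by
    rw [show (p ^ n) ^ 2 = p ^ n * p ^ n from sq (p ^ n), pow_mul]
  rcases mul_eq_zero.mp hfac with h | h
  · have he : u ^ p ^ n = u := by linear_combination h
    rw [hsq, he, he]
  · have he : u ^ p ^ n = b - u := by
      have := sub_eq_zero.mp (by linear_combination h : (u ^ p ^ n - (b - u)) = 0)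
      exact this
    rw [hsq, he, sub_pow_char_pow, hb, he]
    ring

/-- Key algebraic identity for the Dickson polynomial `D₅`. -/
lemma key_id {F : Type*} [Field F] (h5 : (5 : F) ≠ 0) (B u v : F)
    (huv : u * v = -(5 : F)⁻¹ * B) :
    (u + v) ^ 5 + B * (u + v) ^ 3 + (5 : F)⁻¹ * B ^ 2 * (u + v) = u ^ 5 + v ^ 5 := by
  have hB : B = -(5 * (u * v)) := by
    field_simp at huv
    linear_combination huv
  subst hB
  field_simp
  ring

theorem stmt_7 (Q : ℕ) (K : Type*) [Field K] [Fintype K]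
    (hK : Fintype.card K = Q) (hQ : Q % 5 = 2 ∨ Q % 5 = 3) (β : K) :
    Function.Bijective (fun x : K => x ^ 5 + β * x ^ 3 + (5 : K)⁻¹ * β ^ 2 * x) := by
  have hQ2 : 2 ≤ Q := hK ▸ Fintype.one_lt_card
  set p := ringChar K with hpdef
  haveI : CharP K p := ringChar.charP K
  obtain ⟨n, hp, hcard⟩ := FiniteField.card K p
  haveI : Fact p.Prime := ⟨hp⟩
  have hQpn : Q = p ^ (n : ℕ) := hK ▸ hcard
  -- 5 is not the characteristic
  have h5K : (5 : K) ≠ 0 := by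
    intro h
    have hdvd : p ∣ 5 := (CharP.cast_eq_zero_iff K p 5).mp (by exact_mod_cast h)
    have hp5 : p = 5 := (Nat.prime_dvd_prime_iff_eq hp (by norm_num)).mp hdvd
    have : 5 ∣ Q := by
      rw [hQpn, hp5]
      exact dvd_pow_self 5 (by
        intro h0
        rw [h0] at hQpn
        simp at hQpn
        omega)
    omega
  have hxQ : ∀ z : K, z ^ Q = z := fun z => hK ▸ FiniteField.pow_card z
  rw [← Finite.injective_iff_bijective]
  intro x y hxy
  simp only at hxy
  by_cases hβ : β = 0
  · subst hβ
    simp only [zero_mul, mul_zero, ne_eq, OfNat.ofNat_ne_zero, not_false_eq_true,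
      zero_pow, add_zero] at hxy
    have hcop : Nat.Coprime 5 (Q - 1) := by
      rw [Nat.coprime_comm]
      apply Nat.Coprime.symm
      rw [Nat.Prime.coprime_iff_not_dvd (by norm_num)]
      omega
    have hQ1 : Q - 1 + 1 = Q := by omega
    exact fifth_inj (Q - 1) hcop x y (by rw [hQ1]; exact hxQ x) (by rw [hQ1]; exact hxQ y) hxy
  · -- main case: pass to the algebraic closure
    set F := AlgebraicClosure K
    set ι := algebraMap K F with hι
    have hinj : Function.Injective ι := ι.injective
    haveI : CharP F p := charP_of_injective_algebraMap hinj p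
    have h5F : (5 : F) ≠ 0 := by
      intro h
      apply h5K
      apply hinj
      rw [map_ofNat, map_zero, h]
    have hιQ : ∀ z : K, (ι z) ^ Q = ι z := fun z => by rw [← map_pow, hxQ]
    set c : F := -(5 : F)⁻¹ * ι β with hc
    have hcK : c = ι (-(5 : K)⁻¹ * β) := by
      rw [hc, map_mul, map_neg, map_inv₀, map_ofNat]
    have hcQ : c ^ Q = c := by rw [hcK]; exact hιQ _
    have hc0 : c ≠ 0 := by
      rw [hc]
      apply mul_ne_zero
      · simpa using h5F
      · simpa using fun h => hβ (hinj (by rw [h, map_zero]))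
    -- roots of the quadratics
    have hroot : ∀ w : K, ∃ u : F, u ^ 2 = ι w * u - c := by
      intro w
      obtain ⟨u, hu⟩ := IsAlgClosed.exists_root
        (Polynomial.X ^ 2 - Polynomial.C (ι w) * Polynomial.X + Polynomial.C c)
        (by
          have h2 : (Polynomial.X ^ 2 - Polynomial.C (ι w) * Polynomial.X
              + Polynomial.C c : Polynomial F).degree = 2 := by
            compute_degree!
          rw [h2]; norm_num)
      refine ⟨u, ?_⟩
      have := hu
      simp only [Polynomial.IsRoot, Polynomial.eval_add, Polynomial.eval_sub,
        Polynomial.eval_pow, Polynomial.eval_mul, Polynomial.eval_C, Polynomial.eval_X] at this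
      linear_combination this
    obtain ⟨u, hu⟩ := hroot x
    obtain ⟨s, hs⟩ := hroot y
    set v : F := ι x - u with hv
    set t : F := ι y - s with ht
    have huv : u * v = c := by rw [hv]; linear_combination -hu
    have hst : s * t = c := by rw [ht]; linear_combination -hs
    have hv2 : v ^ 2 = ι x * v - c := by rw [hv]; linear_combination hu
    have ht2 : t ^ 2 = ι y * t - c := by rw [ht]; linear_combination hs
    have hufix := root_pow_fix p n Q hQpn (ι x) c u (hιQ x) hcQ hu
    have hvfix := root_pow_fix p n Q hQpn (ι x) c v (hιQ x) hcQ hv2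
    have hsfix := root_pow_fix p n Q hQpn (ι y) c s (hιQ y) hcQ hs
    have htfix := root_pow_fix p n Q hQpn (ι y) c t (hιQ y) hcQ ht2
    -- sums
    have hux : u + v = ι x := by rw [hv]; ring
    have hsy : s + t = ι y := by rw [ht]; ring
    -- the key identity on both sides
    have hfx : u ^ 5 + v ^ 5 = s ^ 5 + t ^ 5 := by
      have h1 := key_id h5F (ι β) u v (by rw [huv, hc])
      have h2 := key_id h5F (ι β) s t (by rw [hst, hc])
      rw [hux] at h1
      rw [hsy] at h2
      rw [← h1, ← h2]
      have := congrArg ι hxy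
      simpa only [map_add, map_mul, map_pow, map_inv₀, map_ofNat] using this
    have hprod : u ^ 5 * v ^ 5 = s ^ 5 * t ^ 5 := by
      rw [← mul_pow, ← mul_pow, huv, hst]
    -- nonvanishing
    have hu0 : u ≠ 0 := fun h => hc0 (by rw [← huv, h, zero_mul])
    have hv0 : v ≠ 0 := fun h => hc0 (by rw [← huv, h, mul_zero])
    -- the multiset {s^5, t^5} equals {u^5, v^5}
    have hcases : (s ^ 5 - u ^ 5) * (s ^ 5 - v ^ 5) = 0 := by
      linear_combination (-(s ^ 5)) * hfx + hprod
    -- coprimality fact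
    have hcop : Nat.Coprime 5 (Q ^ 2 - 1) := by
      have hQ2mod : Q ^ 2 % 5 = 4 := by
        rw [Nat.pow_mod]
        rcases hQ with h | h <;> rw [h] <;> norm_num
      apply Nat.Coprime.symm
      rw [Nat.coprime_comm, Nat.Prime.coprime_iff_not_dvd (by norm_num)]
      omega
    have hQQ : Q ^ 2 - 1 + 1 = Q ^ 2 := by
      have : 1 ≤ Q ^ 2 := Nat.one_le_pow _ _ (by omega)
      omega
    have finj : ∀ w z : F, w ^ Q ^ 2 = w → z ^ Q ^ 2 = z → w ^ 5 = z ^ 5 → w = z := by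
      intro w z hw hz h5
      exact fifth_inj (Q ^ 2 - 1) hcop w z (by rw [hQQ]; exact hw) (by rw [hQQ]; exact hz) h5
    apply hinj
    rw [← hux, ← hsy]
    rcases mul_eq_zero.mp hcases with h | h
    · have hsu : s = u := finj s u hsfix hufix (by linear_combination h)
      have hsu5 : s ^ 5 = u ^ 5 := by rw [hsu]
      have htv : t = v := by
        apply finj t v htfix hvfix
        have h' : u ^ 5 * t ^ 5 = u ^ 5 * v ^ 5 := by
          linear_combination -hprod - t ^ 5 * hsu5
        exact mul_left_cancel₀ (pow_ne_zero _ hu0) h'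
      rw [hsu, htv]
    · have hsv : s = v := finj s v hsfix hvfix (by linear_combination h)
      have hsv5 : s ^ 5 = v ^ 5 := by rw [hsv]
      have htu : t = u := by
        apply finj t u htfix hufix
        have h' : v ^ 5 * t ^ 5 = v ^ 5 * u ^ 5 := by
          linear_combination -hprod - t ^ 5 * hsv5
        exact mul_left_cancel₀ (pow_ne_zero _ hv0) h'
      rw [hsv, htu]
      ring
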